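/- For the greedy algorithm on a monotone submodular function f with f(∅)=0, after k steps f(S_k) ≥ (1 − (1 − 1/K)^k)·max_{|S|=K} f(S). -/

import Mathlib

private lemma submod_sum_bound {α : Type*} [DecidableEq α]
    (f : Finset α → ℝ)
    (hsub : ∀ A B : Finset α, A ⊆ B → ∀ i ∉ B,
      f (insert i B) - f B ≤ f (insert i A) - f A)
    (S : Finset α) :
    ∀ T : Finset α, f (S ∪ T) ≤ f S + ∑ e ∈ T \ S, (f (insert e S) - f S) := by
  intro T
  induction T using Finset.induction_on with
  | empty => simp
  | @insert a T' ha ih =>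
    by_cases haS : a ∈ S
    · have h1 : S ∪ insert a T' = S ∪ T' := by
        rw [Finset.union_insert, Finset.insert_eq_self.mpr (Finset.mem_union_left _ haS)]
      have h2 : insert a T' \ S = T' \ S := Finset.insert_sdiff_of_mem _ haS
      rw [h1, h2]; exact ih
    · have h1 : S ∪ insert a T' = insert a (S ∪ T') := Finset.union_insert _ _ _
      have h2 : insert a T' \ S = insert a (T' \ S) :=
        Finset.insert_sdiff_of_notMem _ haS
      have ha' : a ∉ T' \ S := by simp [ha]
      rw [h1, h2, Finset.sum_insert ha']
      have haST : a ∉ S ∪ T' := by simp [haS, ha]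
      have := hsub S (S ∪ T') Finset.subset_union_left a haST
      linarith

theorem greedy_per_iteration_bound {α : Type*} [Fintype α] [DecidableEq α]
    (f : Finset α → ℝ) (h0 : f ∅ = 0)
    (hmono : ∀ A B : Finset α, A ⊆ B → f A ≤ f B)
    (hsub : ∀ A B : Finset α, A ⊆ B → ∀ i ∉ B,
      f (insert i B) - f B ≤ f (insert i A) - f A)
    (K : ℕ) (hK : 1 ≤ K) (Sel : ℕ → Finset α) (hSel0 : Sel 0 = ∅)
    (hstep : ∀ k < K, ∃ x ∉ Sel k, Sel (k + 1) = insert x (Sel k) ∧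
      ∀ y ∉ Sel k, f (insert y (Sel k)) ≤ f (insert x (Sel k))) :
    ∀ k ≤ K, ∀ T : Finset α, T.card ≤ K →
      (1 - (1 - 1 / (K : ℝ)) ^ k) * f T ≤ f (Sel k) := by
  have hKpos : (0:ℝ) < K := by exact_mod_cast hK
  set c : ℝ := 1 - 1 / (K : ℝ) with hc
  clear_value c
  have hK1 : 1 / (K:ℝ) ≤ 1 := by
    rw [div_le_one hKpos]; exact_mod_cast hK
  have hc0 : 0 ≤ c := by rw [hc]; linarith
  intro k
  induction k with
  | zero => intro _ T _; simp [hSel0, h0]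
  | succ k ih =>
    intro hk1 T hT
    have hkK : k < K := hk1
    have hle : k ≤ K := Nat.le_of_lt hkK
    have ihT := ih hle T hT
    obtain ⟨x, hx, hSel, hmax⟩ := hstep k hkK
    set S := Sel k with hS
    clear_value S
    set g : ℝ := f (insert x S) - f S with hg
    have hg0 : 0 ≤ g := by
      have := hmono S (insert x S) (Finset.subset_insert x S)
      rw [hg]; linarith
    have hkey : f T ≤ f S + K * g := by
      have h1 : f T ≤ f (S ∪ T) := hmono T (S ∪ T) Finset.subset_union_right
      have h2 := submod_sum_bound f hsub S T
      have h3 : ∑ e ∈ T \ S, (f (insert e S) - f S) ≤ (T \ S).card • g := by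
        apply Finset.sum_le_card_nsmul
        intro e he
        have heS : e ∉ S := (Finset.mem_sdiff.mp he).2
        have := hmax e heS
        rw [hg]; linarith
      rw [nsmul_eq_mul] at h3
      have h4 : ((T \ S).card : ℝ) ≤ K := by
        have : (T \ S).card ≤ T.card := Finset.card_le_card Finset.sdiff_subset
        exact_mod_cast this.trans hT
      have h5 : ((T \ S).card : ℝ) * g ≤ K * g :=
        mul_le_mul_of_nonneg_right h4 hg0
      linarith
    have hfT0 : 0 ≤ f T := by
      have := hmono ∅ T (Finset.empty_subset T); linarith
    have hnext : f (Sel (k+1)) = f S + g := by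
      rw [hSel, hg]; ring
    have hck : 0 ≤ (1 - c ^ k) := by
      have hinv : 0 ≤ 1/(K:ℝ) := by positivity
      have hc1 : c ≤ 1 := by rw [hc]; linarith
      have : c ^ k ≤ 1 := pow_le_one₀ hc0 hc1
      linarith
    have h6 : c * ((1 - c ^ k) * f T) ≤ c * f S :=
      mul_le_mul_of_nonneg_left ihT hc0
    have hid : (1 - c ^ (k+1)) * f T = c * ((1 - c ^ k) * f T) + f T / K := by
      rw [hc]; ring
    have hgain : f T / K ≤ f S / K + g := by
      rw [div_le_iff₀ hKpos]
      have hexp : (f S / ↑K + g) * ↑K = f S + g * ↑K := by field_simp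
      rw [hexp]; linarith
    have hcS : c * f S = f S - f S / K := by rw [hc]; ring
    rw [hnext]
    linarith
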